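/- If a PMD {M^{a|x}} on ℂ^d is star-compatible with respect to x*, then for any density operator ρ_AB on ℂ^d ⊗ ℂ^d, the resulting assemblage σ^{a|x} = Tr_A[(M^{a|x} ⊗ 𝟙)ρ_AB] is star-unsteerable with respect to x*: the operators ρ^{a,b|x} := Tr_A[(J^{a,b|x} ⊗ 𝟙)ρ_AB] (where J witnesses star-compatibility) are positive semidefinite and satisfy Σ_b ρ^{a,b|x} = σ^{a|x} and Σ_a ρ^{a,b|x} = σ^{b|x*}. -/

import Mathlib

open Matrix BigOperators Kronecker ComplexOrder

/-- Partial trace over the first tensor factor. -/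
noncomputable def trA {dA dB : Type*} [Fintype dA]
    (M : Matrix (dA × dB) (dA × dB) ℂ) : Matrix dB dB ℂ :=
  Matrix.of fun j j' => ∑ i, M (i, j) (i, j')

lemma trA_cycle {dA dB : Type*} [Fintype dA] [Fintype dB] [DecidableEq dB]
    (C : Matrix dA dA ℂ) (N : Matrix (dA × dB) (dA × dB) ℂ) :
    trA ((C ⊗ₖ (1 : Matrix dB dB ℂ)) * N) = trA (N * (C ⊗ₖ (1 : Matrix dB dB ℂ))) := by
  ext j j'
  simp only [trA, Matrix.of_apply, Matrix.mul_apply, Matrix.kroneckerMap_apply,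
    Matrix.one_apply, Fintype.sum_prod_type, mul_ite, mul_one, mul_zero, ite_mul,
    zero_mul, one_mul, Finset.sum_ite_eq, Finset.sum_ite_eq', Finset.mem_univ, if_true]
  rw [Finset.sum_comm]
  exact Finset.sum_congr rfl fun i _ => Finset.sum_congr rfl fun i' _ => mul_comm _ _

lemma kron_one_conjTranspose {dA dB : Type*} [Fintype dB] [DecidableEq dB]
    (C : Matrix dA dA ℂ) :
    (C ⊗ₖ (1 : Matrix dB dB ℂ))ᴴ = Cᴴ ⊗ₖ (1 : Matrix dB dB ℂ) := by
  ext ⟨i, k⟩ ⟨i', k'⟩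
  simp only [Matrix.conjTranspose_apply, Matrix.kroneckerMap_apply, Matrix.one_apply,
    star_mul', apply_ite (star : ℂ → ℂ), star_one, star_zero]
  by_cases h : k = k'
  · subst h; simp
  · simp [h, Ne.symm h]

lemma trA_mul_conjTranspose_posSemidef {dA dB : Type*} [Fintype dA] [Fintype dB]
    (Q : Matrix (dA × dB) (dA × dB) ℂ) : (trA (Q * Qᴴ)).PosSemidef := by
  classical
  have : trA (Q * Qᴴ) =
      (Matrix.of fun (k : dA × (dA × dB)) (j : dB) => star (Q (k.1, j) k.2))ᴴ *
      (Matrix.of fun (k : dA × (dA × dB)) (j : dB) => star (Q (k.1, j) k.2)) := by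
    ext j j'
    simp only [trA, Matrix.of_apply, Matrix.mul_apply, Matrix.conjTranspose_apply,
      Fintype.sum_prod_type, star_star]
  rw [this]
  exact Matrix.posSemidef_conjTranspose_mul_self _

lemma trA_sum {dA dB ι : Type*} [Fintype dA] (s : Finset ι)
    (f : ι → Matrix (dA × dB) (dA × dB) ℂ) :
    trA (∑ i ∈ s, f i) = ∑ i ∈ s, trA (f i) := by
  ext j j'
  simp only [trA, Matrix.of_apply, Matrix.sum_apply]
  rw [Finset.sum_comm]

lemma sum_kron_one {dA dB ι : Type*} [Fintype dB] [DecidableEq dB] (s : Finset ι)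
    (f : ι → Matrix dA dA ℂ) :
    ∑ i ∈ s, (f i ⊗ₖ (1 : Matrix dB dB ℂ)) = (∑ i ∈ s, f i) ⊗ₖ (1 : Matrix dB dB ℂ) := by
  ext ⟨i, k⟩ ⟨i', k'⟩
  simp [Matrix.sum_apply, Finset.sum_mul]

/-- a star-compatible PMD generates only star-unsteerable assemblages,
witnessed by ρ^{a,b|x} = Tr_A[(J^{a,b|x} ⊗ 𝟙)ρ_AB]. -/
theorem starCompatible_imp_starUnsteerable (d : ℕ) (hd : 0 < d)
    (A X : Type) [Fintype A] [Fintype X] (xs : X)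
    (M : X → A → Matrix (Fin d) (Fin d) ℂ)
    (hpsd : ∀ x a, (M x a).PosSemidef) (hpovm : ∀ x, ∑ a, M x a = 1)
    (J : X → A → A → Matrix (Fin d) (Fin d) ℂ)
    (hJpsd : ∀ x, x ≠ xs → ∀ a b, (J x a b).PosSemidef)
    (hJsum : ∀ x, x ≠ xs → ∑ a, ∑ b, J x a b = 1)
    (hJm1 : ∀ x, x ≠ xs → ∀ a, ∑ b, J x a b = M x a)
    (hJm2 : ∀ x, x ≠ xs → ∀ b, ∑ a, J x a b = M xs b)
    (ρAB : Matrix ((Fin d) × (Fin d)) ((Fin d) × (Fin d)) ℂ)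
    (hρ : ρAB.PosSemidef) (htr : ρAB.trace = 1) :
    let σ : X → A → Matrix (Fin d) (Fin d) ℂ :=
      fun x a => trA ((M x a ⊗ₖ (1 : Matrix (Fin d) (Fin d) ℂ)) * ρAB)
    let ρab : X → A → A → Matrix (Fin d) (Fin d) ℂ :=
      fun x a b => trA ((J x a b ⊗ₖ (1 : Matrix (Fin d) (Fin d) ℂ)) * ρAB)
    (∀ x, x ≠ xs → ∀ a b, (ρab x a b).PosSemidef) ∧
    (∀ x, x ≠ xs → ∀ a, ∑ b, ρab x a b = σ x a) ∧
    (∀ x, x ≠ xs → ∀ b, ∑ a, ρab x a b = σ xs b) := by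
  intro σ ρab
  refine ⟨?_, ?_, ?_⟩
  · intro x hx a b
    obtain ⟨B, hB⟩ : ∃ B : Matrix (Fin d) (Fin d) ℂ, J x a b = Bᴴ * B := by
      open scoped MatrixOrder in exact CStarAlgebra.nonneg_iff_eq_star_mul_self.mp (hJpsd x hx a b).nonneg
    obtain ⟨S, hS⟩ : ∃ S : Matrix ((Fin d) × (Fin d)) ((Fin d) × (Fin d)) ℂ, ρAB = Sᴴ * S := by
      open scoped MatrixOrder in exact CStarAlgebra.nonneg_iff_eq_star_mul_self.mp hρ.nonneg
    have key : ρab x a b = trA (((B ⊗ₖ (1 : Matrix (Fin d) (Fin d) ℂ)) * Sᴴ) *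
        ((B ⊗ₖ (1 : Matrix (Fin d) (Fin d) ℂ)) * Sᴴ)ᴴ) := by
      show trA ((J x a b ⊗ₖ (1 : Matrix (Fin d) (Fin d) ℂ)) * ρAB) = _
      have h1 : (J x a b ⊗ₖ (1 : Matrix (Fin d) (Fin d) ℂ)) =
          (Bᴴ ⊗ₖ (1 : Matrix (Fin d) (Fin d) ℂ)) * (B ⊗ₖ (1 : Matrix (Fin d) (Fin d) ℂ)) := by
        rw [← Matrix.mul_kronecker_mul, one_mul, hB]
      rw [h1, hS, Matrix.mul_assoc, trA_cycle, Matrix.conjTranspose_mul,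
        Matrix.conjTranspose_conjTranspose, kron_one_conjTranspose,
        Matrix.mul_assoc, Matrix.mul_assoc, Matrix.mul_assoc]
    rw [key]
    exact trA_mul_conjTranspose_posSemidef _
  · intro x hx a
    show ∑ b, trA ((J x a b ⊗ₖ (1 : Matrix (Fin d) (Fin d) ℂ)) * ρAB) = _
    rw [← trA_sum, ← Finset.sum_mul, sum_kron_one, hJm1 x hx a]
  · intro x hx b
    show ∑ a, trA ((J x a b ⊗ₖ (1 : Matrix (Fin d) (Fin d) ℂ)) * ρAB) = _
    rw [← trA_sum, ← Finset.sum_mul, sum_kron_one, hJm2 x hx b]
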